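/- Let Ψ(t) = a_n t^n + ... + a_0 be a complex polynomial of degree n with roots z_1, ..., z_n ordered so that |z_1| ≥ |z_2| ≥ ... ≥ |z_n|. If the j-th elementary symmetric function of the roots vanishes, i.e. S_j = Σ_{S ⊆ {1,...,n}, |S|=j} Π_{i∈S} (-z_i) = 0, for some 1 ≤ j ≤ n-1, then |z_j| ≤ C(n,j) |z_{j+1}| where C(n,j) = n choose j. In particular |z_{j+1}| and |z_j| are comparable with constant depending only on n and j. -/

import Mathlib

/-- Product over any finset of ℕ of an antitone nonneg function is at most
the product over `range card`. -/
lemma aux_prod_le (g : ℕ → ℝ) (hg0 : ∀ i, 0 ≤ g i) (hga : ∀ a b, a ≤ b → g b ≤ g a)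
    (T : Finset ℕ) : ∏ i ∈ T, g i ≤ ∏ i ∈ Finset.range T.card, g i := by
  induction T using Finset.strongInduction with
  | _ T ih =>
    rcases T.eq_empty_or_nonempty with rfl | hT
    · simp
    · set m := T.max' hT with hmdef
      have hmem : m ∈ T := T.max'_mem hT
      have hsub : T ⊆ Finset.range (m + 1) := by
        intro x hx
        simp only [Finset.mem_range, Nat.lt_succ_iff]
        exact T.le_max' x hx
      have hcard : T.card ≤ m + 1 := by
        have := Finset.card_le_card hsub
        rwa [Finset.card_range] at this
      have hcard1 : T.card - 1 ≤ m := by omega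
      have hpos : 1 ≤ T.card := Finset.card_pos.mpr hT
      have herase : (T.erase m).card = T.card - 1 := Finset.card_erase_of_mem hmem
      have hih : ∏ i ∈ T.erase m, g i ≤ ∏ i ∈ Finset.range (T.card - 1), g i := by
        have := ih (T.erase m) (Finset.erase_ssubset hmem)
        rwa [herase] at this
      calc ∏ i ∈ T, g i = g m * ∏ i ∈ T.erase m, g i := (Finset.mul_prod_erase T g hmem).symm
        _ ≤ g (T.card - 1) * ∏ i ∈ Finset.range (T.card - 1), g i := by
            apply mul_le_mul (hga _ _ hcard1) hih
              (Finset.prod_nonneg fun i _ => hg0 i) (hg0 _)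
        _ = ∏ i ∈ Finset.range (T.card - 1 + 1), g i := by
            rw [Finset.prod_range_succ, mul_comm]
        _ = ∏ i ∈ Finset.range T.card, g i := by rw [Nat.sub_add_cancel hpos]

/-- The `j`-th elementary symmetric function of the (negated) elements of a multiset:
`S j A = Σ_{|S|=j, S ⊆ A} Π_{z∈S} (-z)`. -/
noncomputable def S (A : Multiset ℂ) (j : ℕ) : ℂ :=
  ((Multiset.powersetCard j (A.map (fun z => -z))).map Multiset.prod).sum

/-- If the `j`-th elementary symmetric function of the roots of a degree-`n` complex
polynomial vanishes (roots ordered by decreasing modulus), then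
`|z_j| ≤ (n choose j) · |z_{j+1}|`. -/
theorem stmt0 (n : ℕ) (P : Polynomial ℂ) (z : ℕ → ℂ)
    (hP : P ≠ 0) (hdeg : P.natDegree = n)
    (hroots : P.roots = (Multiset.range n).map (fun i => z (i + 1)))
    (hord : ∀ a b, 1 ≤ a → a ≤ b → b ≤ n → ‖z b‖ ≤ ‖z a‖)
    (j : ℕ) (hj1 : 1 ≤ j) (hj2 : j ≤ n - 1)
    (hSj : S P.roots j = 0) :
    ‖z j‖ ≤ (n.choose j : ℝ) * ‖z (j + 1)‖ := by
  have hn2 : 2 ≤ n := by omega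
  have hjn : j + 1 ≤ n := by omega
  -- the modulus function, extended to be antitone on all of ℕ
  set g : ℕ → ℝ := fun i => ‖z (min (i + 1) n)‖ with hgdef
  have hg0 : ∀ i, 0 ≤ g i := fun i => norm_nonneg _
  have hga : ∀ a b, a ≤ b → g b ≤ g a := by
    intro a b hab
    exact hord (min (a + 1) n) (min (b + 1) n) (by omega) (by omega) (by omega)
  have hgeq : ∀ i, i < n → g i = ‖z (i + 1)‖ := by
    intro i hi
    simp only [hgdef]
    congr 2
    omega
  -- convert hSj to a Finset sum
  have hsum : ∑ T ∈ (Finset.range n).powersetCard j, ∏ i ∈ T, z (i + 1) = 0 := by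
    have h1 : S P.roots j = (P.roots.map (fun z => -z)).esymm j := rfl
    rw [h1, hroots] at hSj
    have h2 : ((Multiset.range n).map (fun i => z (i + 1))).map (fun z => -z)
        = (Finset.range n).val.map (fun i => -z (i + 1)) := by
      rw [Multiset.map_map]; rfl
    rw [h2, Finset.esymm_map_val] at hSj
    have h3 : ∀ T ∈ (Finset.range n).powersetCard j,
        ∏ i ∈ T, (-z (i + 1)) = (-1 : ℂ) ^ j * ∏ i ∈ T, z (i + 1) := by
      intro T hT
      rw [Finset.mem_powersetCard] at hT
      rw [← hT.2]
      rw [show (fun i => -z (i + 1)) = fun i => (-1 : ℂ) * z (i + 1) by funext i; ring]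
      rw [Finset.prod_mul_distrib, Finset.prod_const]
    rw [Finset.sum_congr rfl h3, ← Finset.mul_sum] at hSj
    have : ((-1 : ℂ) ^ j) ≠ 0 := by
      apply pow_ne_zero; norm_num
    exact (mul_eq_zero.mp hSj).resolve_left this
  -- key term versus the rest
  set PS := (Finset.range n).powersetCard j with hPdef
  have hT0 : Finset.range j ∈ PS := by
    rw [Finset.mem_powersetCard]
    exact ⟨Finset.range_subset_range.mpr (by omega), Finset.card_range j⟩
  have hsplit : ∏ i ∈ Finset.range j, z (i + 1)
      = - ∑ T ∈ PS.erase (Finset.range j), ∏ i ∈ T, z (i + 1) := by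
    have := Finset.add_sum_erase PS (fun T => ∏ i ∈ T, z (i + 1)) hT0
    rw [hsum] at this
    linear_combination this
  -- bound each other term
  have hbound : ∀ T ∈ PS.erase (Finset.range j),
      ‖∏ i ∈ T, z (i + 1)‖ ≤ (∏ i ∈ Finset.range (j - 1), g i) * g j := by
    intro T hT
    rw [Finset.mem_erase, hPdef, Finset.mem_powersetCard] at hT
    obtain ⟨hne, hsub, hcard⟩ := hT
    -- T has an element ≥ j
    obtain ⟨m, hmT, hmj⟩ : ∃ m ∈ T, j ≤ m := by
      by_contra hcon
      push_neg at hcon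
      have : T ⊆ Finset.range j := fun x hx => Finset.mem_range.mpr (hcon x hx)
      exact hne (Finset.eq_of_subset_of_card_le this (by rw [hcard, Finset.card_range]))
      -- eq_of_subset_of_card_le : T ⊆ s → s.card ≤ T.card → T = s
    have hmn : m < n := Finset.mem_range.mp (hsub hmT)
    have habs : ‖∏ i ∈ T, z (i + 1)‖ = ∏ i ∈ T, g i := by
      rw [norm_prod]
      apply Finset.prod_congr rfl
      intro i hi
      exact (hgeq i (Finset.mem_range.mp (hsub hi))).symm
    rw [habs, ← Finset.mul_prod_erase T g hmT]
    have h1 : ∏ i ∈ T.erase m, g i ≤ ∏ i ∈ Finset.range (j - 1), g i := by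
      have := aux_prod_le g hg0 hga (T.erase m)
      rwa [Finset.card_erase_of_mem hmT, hcard] at this
    have h2 : g m ≤ g j := hga j m hmj
    calc g m * ∏ i ∈ T.erase m, g i ≤ g j * ∏ i ∈ Finset.range (j - 1), g i := by
          apply mul_le_mul h2 h1 (Finset.prod_nonneg fun i _ => hg0 i) (hg0 _)
      _ = (∏ i ∈ Finset.range (j - 1), g i) * g j := mul_comm _ _
  -- sum the bounds
  have hcardPS : PS.card = n.choose j := by
    rw [hPdef, Finset.card_powersetCard, Finset.card_range]
  have hmain : ∏ i ∈ Finset.range j, g i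
      ≤ ((n.choose j - 1 : ℕ) : ℝ) * ((∏ i ∈ Finset.range (j - 1), g i) * g j) := by
    have h1 : ‖∏ i ∈ Finset.range j, z (i + 1)‖
        ≤ ∑ T ∈ PS.erase (Finset.range j), ‖∏ i ∈ T, z (i + 1)‖ := by
      rw [hsplit, norm_neg]
      exact norm_sum_le _ _
    have h2 : ∑ T ∈ PS.erase (Finset.range j), ‖∏ i ∈ T, z (i + 1)‖
        ≤ ((n.choose j - 1 : ℕ) : ℝ) * ((∏ i ∈ Finset.range (j - 1), g i) * g j) := by
      have := Finset.sum_le_card_nsmul (PS.erase (Finset.range j))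
        (fun T => ‖∏ i ∈ T, z (i + 1)‖)
        ((∏ i ∈ Finset.range (j - 1), g i) * g j) hbound
      rwa [Finset.card_erase_of_mem hT0, hcardPS, nsmul_eq_mul] at this
    have h3 : ‖∏ i ∈ Finset.range j, z (i + 1)‖ = ∏ i ∈ Finset.range j, g i := by
      rw [norm_prod]
      apply Finset.prod_congr rfl
      intro i hi
      exact (hgeq i (by have := Finset.mem_range.mp hi; omega)).symm
    rw [← h3]
    exact h1.trans h2
  -- peel off the last factor on the left
  have hrange : Finset.range j = Finset.range (j - 1 + 1) := by congr 1; omega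
  rw [hrange, Finset.prod_range_succ] at hmain
  set Pr := ∏ i ∈ Finset.range (j - 1), g i with hPr
  have hPr0 : 0 ≤ Pr := Finset.prod_nonneg fun i _ => hg0 i
  have hgj1 : g (j - 1) = ‖z j‖ := by
    rw [hgeq (j - 1) (by omega), Nat.sub_add_cancel hj1]
  have hgj : g j = ‖z (j + 1)‖ := hgeq j (by omega)
  rcases eq_or_lt_of_le hPr0 with hPr0' | hPr0'
  · -- Pr = 0 : then some g i = 0 with i < j - 1, hence |z j| = 0
    obtain ⟨i, hi, hgi⟩ : ∃ i ∈ Finset.range (j - 1), g i = 0 := by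
      by_contra hcon
      push_neg at hcon
      have : Pr ≠ 0 := Finset.prod_ne_zero_iff.mpr hcon
      exact this hPr0'.symm
    have : g (j - 1) ≤ g i := hga i (j - 1) (by have := Finset.mem_range.mp hi; omega)
    have hz0 : ‖z j‖ = 0 := le_antisymm (by rw [← hgj1]; rw [hgi] at this; exact this)
      (norm_nonneg _)
    rw [hz0]
    positivity
  · -- Pr > 0 : divide
    have hkey : Pr * g (j - 1) ≤ Pr * (((n.choose j - 1 : ℕ) : ℝ) * g j) := by
      calc Pr * g (j - 1) ≤ ((n.choose j - 1 : ℕ) : ℝ) * (Pr * g j) := hmain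
        _ = Pr * (((n.choose j - 1 : ℕ) : ℝ) * g j) := by ring
    have := le_of_mul_le_mul_left hkey hPr0'
    rw [hgj1, hgj] at this
    have hch : ((n.choose j - 1 : ℕ) : ℝ) ≤ (n.choose j : ℝ) := by
      exact_mod_cast Nat.sub_le _ _
    calc ‖z j‖ ≤ ((n.choose j - 1 : ℕ) : ℝ) * ‖z (j + 1)‖ := this
      _ ≤ (n.choose j : ℝ) * ‖z (j + 1)‖ := by
          apply mul_le_mul_of_nonneg_right hch (norm_nonneg _)
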